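/- For every t ≥ 0 and every x ∈ ℝ² with x ≠ 0, the Oseen vortex velocity field satisfies the heat equation componentwise: ∂_t Θ(x,t) = ΔΘ(x,t), where Δ is the Laplacian in the x-variables. -/

import Mathlib

open MeasureTheory Filter
open scoped Classical

noncomputable section

abbrev E2 := EuclideanSpace ℝ (Fin 2)

/-- The vector `(a, b)` in `ℝ²` (with the Euclidean norm). -/
def vec2 (a b : ℝ) : E2 := (WithLp.equiv 2 (Fin 2 → ℝ)).symm ![a, b]

/-- `x^⊥ = (-x₂, x₁)`. -/
def perp (x : E2) : E2 := vec2 (-(x 1)) (x 0)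

/-- The Oseen vortex velocity field. -/
def theta (t : ℝ) (x : E2) : E2 :=
  if x = 0 then 0 else
    ((1 - Real.exp (-(‖x‖ ^ 2) / (4 * (1 + t)))) / (2 * Real.pi * ‖x‖ ^ 2)) • perp x

/-- The Oseen vorticity (Gaussian). -/
def Xi (t : ℝ) (x : E2) : ℝ :=
  (1 / (4 * Real.pi * (1 + t))) * Real.exp (-(‖x‖ ^ 2) / (4 * (1 + t)))

/-- The `i`-th standard basis vector of `ℝ²`. -/
def e2 (i : Fin 2) : E2 := EuclideanSpace.single i 1

/-- The truncated Oseen vortex `u^χ(x,t) = χ̃(x/ρ) Θ(x,t)`. -/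
def uchi (χt : E2 → ℝ) (ρ t : ℝ) (x : E2) : E2 := χt (ρ⁻¹ • x) • theta t x

/-! ### Auxiliary scalar functions -/

/-- The radial profile `G(t,s) = (1 - e^{-s/(4(1+t))})/(2π s)`. -/
def Gfun (t s : ℝ) : ℝ := (1 - Real.exp (-s / (4 * (1 + t)))) / (2 * Real.pi * s)

/-- The `s`-derivative of `Gfun`. -/
def Gfun1 (t s : ℝ) : ℝ :=
  (Real.exp (-s / (4 * (1 + t))) * s / (4 * (1 + t)) - (1 - Real.exp (-s / (4 * (1 + t)))))
    / (2 * Real.pi * s ^ 2)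

/-- The second `s`-derivative of `Gfun`. -/
def Gfun2 (t s : ℝ) : ℝ :=
  (-(Real.exp (-s / (4 * (1 + t))) * s ^ 2 / (4 * (1 + t)) ^ 2)
    - 2 * (Real.exp (-s / (4 * (1 + t))) * s / (4 * (1 + t)) - (1 - Real.exp (-s / (4 * (1 + t))))))
    / (2 * Real.pi * s ^ 3)

/-- The `t`-derivative of `Gfun`. -/
def GfunT (t s : ℝ) : ℝ := -(Real.exp (-s / (4 * (1 + t))) / (8 * Real.pi * (1 + t) ^ 2))

lemma hexp_aux (t : ℝ) (s : ℝ) :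
    HasDerivAt (fun s : ℝ => Real.exp (-s / (4 * (1 + t))))
      (Real.exp (-s / (4 * (1 + t))) * (-1 / (4 * (1 + t)))) s := by
  have h0 : HasDerivAt (fun s : ℝ => -s / (4 * (1 + t))) (-1 / (4 * (1 + t))) s := by
    simpa using ((hasDerivAt_id s).neg.div_const (4 * (1 + t)))
  simpa [mul_comm] using h0.exp

lemma hasDerivAt_Gfun (t : ℝ) (ht : (1:ℝ) + t ≠ 0) {s : ℝ} (hs : s ≠ 0) :
    HasDerivAt (Gfun t) (Gfun1 t s) s := by
  have hc : (4:ℝ) * (1 + t) ≠ 0 := mul_ne_zero four_ne_zero ht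
  have hnum : HasDerivAt (fun s : ℝ => 1 - Real.exp (-s / (4 * (1 + t))))
      (0 - Real.exp (-s / (4 * (1 + t))) * (-1 / (4 * (1 + t)))) s :=
    (hasDerivAt_const s 1).sub (hexp_aux t s)
  have hden : HasDerivAt (fun s : ℝ => 2 * Real.pi * s) (2 * Real.pi) s := by
    simpa using (hasDerivAt_id s).const_mul (2 * Real.pi)
  have hden0 : 2 * Real.pi * s ≠ 0 := mul_ne_zero (by positivity) hs
  have h := hnum.div hden hden0
  refine h.congr_deriv ?_
  unfold Gfun1
  field_simp
  ring

lemma hasDerivAt_Gfun1 (t : ℝ) (ht : (1:ℝ) + t ≠ 0) {s : ℝ} (hs : s ≠ 0) :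
    HasDerivAt (Gfun1 t) (Gfun2 t s) s := by
  have hc : (4:ℝ) * (1 + t) ≠ 0 := mul_ne_zero four_ne_zero ht
  have h1 : HasDerivAt (fun s : ℝ => Real.exp (-s / (4 * (1 + t))) * s)
      (Real.exp (-s / (4 * (1 + t))) * (-1 / (4 * (1 + t))) * s
        + Real.exp (-s / (4 * (1 + t))) * 1) s := (hexp_aux t s).mul (hasDerivAt_id s)
  have hnum : HasDerivAt
      (fun s : ℝ => Real.exp (-s / (4 * (1 + t))) * s / (4 * (1 + t))
        - (1 - Real.exp (-s / (4 * (1 + t)))))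
      ((Real.exp (-s / (4 * (1 + t))) * (-1 / (4 * (1 + t))) * s
        + Real.exp (-s / (4 * (1 + t))) * 1) / (4 * (1 + t))
        - (0 - Real.exp (-s / (4 * (1 + t))) * (-1 / (4 * (1 + t))))) s :=
    (h1.div_const _).sub ((hasDerivAt_const s 1).sub (hexp_aux t s))
  have hden : HasDerivAt (fun s : ℝ => 2 * Real.pi * s ^ 2)
      (2 * Real.pi * (2 * s)) s := by
    have := (hasDerivAt_pow 2 s).const_mul (2 * Real.pi)
    simpa [mul_comm, mul_assoc] using this
  have hden0 : 2 * Real.pi * s ^ 2 ≠ 0 := mul_ne_zero (by positivity) (pow_ne_zero _ hs)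
  have h := hnum.div hden hden0
  refine h.congr_deriv ?_
  unfold Gfun2
  field_simp
  ring

lemma hasDerivAt_GfunT (t : ℝ) (ht : (1:ℝ) + t ≠ 0) {s : ℝ} (hs : s ≠ 0) :
    HasDerivAt (fun t' : ℝ => Gfun t' s) (GfunT t s) t := by
  have hc : (4:ℝ) * (1 + t) ≠ 0 := mul_ne_zero four_ne_zero ht
  have h4 : HasDerivAt (fun t' : ℝ => 4 * (1 + t')) 4 t := by
    simpa using ((hasDerivAt_const t (1:ℝ)).add (hasDerivAt_id t)).const_mul 4
  have hin : HasDerivAt (fun t' : ℝ => -s / (4 * (1 + t')))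
      ((0 * (4 * (1 + t)) - -s * 4) / (4 * (1 + t)) ^ 2) t :=
    (hasDerivAt_const t (-s)).div h4 hc
  have hnum : HasDerivAt (fun t' : ℝ => 1 - Real.exp (-s / (4 * (1 + t'))))
      (0 - Real.exp (-s / (4 * (1 + t)))
        * ((0 * (4 * (1 + t)) - -s * 4) / (4 * (1 + t)) ^ 2)) t :=
    (hasDerivAt_const t 1).sub (by simpa [mul_comm] using hin.exp)
  have h := hnum.div_const (2 * Real.pi * s)
  refine h.congr_deriv ?_
  unfold GfunT
  field_simp
  ring

lemma heat_identity (t : ℝ) (ht : (1:ℝ) + t ≠ 0) {s : ℝ} (hs : s ≠ 0) :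
    GfunT t s = 4 * s * Gfun2 t s + 8 * Gfun1 t s := by
  have hc : (4:ℝ) * (1 + t) ≠ 0 := mul_ne_zero four_ne_zero ht
  unfold GfunT Gfun1 Gfun2
  field_simp
  ring

/-! ### The linear part of `theta` -/

/-- The linear maps `z ↦ (perp z) i`. -/
def Lc : Fin 2 → (E2 →L[ℝ] ℝ) :=
  ![-(EuclideanSpace.proj (1 : Fin 2)), EuclideanSpace.proj (0 : Fin 2)]

lemma perp_apply' (z : E2) (i : Fin 2) : perp z i = Lc i z := by
  fin_cases i <;> simp [perp, vec2, Lc, EuclideanSpace.proj]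

lemma theta_apply' (t : ℝ) (z : E2) (i : Fin 2) : theta t z i = Gfun t (‖z‖ ^ 2) * Lc i z := by
  unfold theta
  split_ifs with h
  · subst h
    simp [Gfun]
  · rw [show ((((1 - Real.exp (-(‖z‖ ^ 2) / (4 * (1 + t)))) / (2 * Real.pi * ‖z‖ ^ 2)) • perp z : E2) i)
        = ((1 - Real.exp (-(‖z‖ ^ 2) / (4 * (1 + t)))) / (2 * Real.pi * ‖z‖ ^ 2)) * perp z i from rfl,
      perp_apply']
    rfl

lemma norm_sq_hasFDerivAt' (y : E2) :
    HasFDerivAt (fun z : E2 => ‖z‖ ^ 2) (2 • innerSL ℝ y) y := by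
  simpa using (hasFDerivAt_id y).norm_sq

lemma theta_hasFDerivAt (t : ℝ) (ht : (1:ℝ) + t ≠ 0) (i : Fin 2) {y : E2} (hy : y ≠ 0) :
    HasFDerivAt (fun z => theta t z i)
      (Gfun t (‖y‖ ^ 2) • (Lc i) + (Lc i y) • (Gfun1 t (‖y‖ ^ 2) • (2 • innerSL ℝ y))) y := by
  have hs : ‖y‖ ^ 2 ≠ 0 := pow_ne_zero _ (norm_ne_zero_iff.mpr hy)
  have h1 : HasFDerivAt (fun z : E2 => Gfun t (‖z‖ ^ 2))
      (Gfun1 t (‖y‖ ^ 2) • (2 • innerSL ℝ y)) y :=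
    by have := (hasDerivAt_Gfun t ht hs).comp_hasFDerivAt y (norm_sq_hasFDerivAt' y); exact this
  have h2 : HasFDerivAt (fun z : E2 => Lc i z) (Lc i) y := (Lc i).hasFDerivAt
  have key := h1.mul h2
  have heq : (fun z : E2 => theta t z i) = fun z => Gfun t (‖z‖ ^ 2) * Lc i z :=
    funext fun z => theta_apply' t z i
  rw [heq]
  exact key

lemma fderiv_theta_eval (t : ℝ) (ht : (1:ℝ) + t ≠ 0) (i j : Fin 2) {y : E2} (hy : y ≠ 0) :
    fderiv ℝ (fun z => theta t z i) y (e2 j)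
      = Gfun t (‖y‖ ^ 2) * Lc i (e2 j) + Lc i y * (Gfun1 t (‖y‖ ^ 2) * (2 * y j)) := by
  rw [(theta_hasFDerivAt t ht i hy).fderiv]
  have hinner : (inner ℝ y (e2 j) : ℝ) = y j := by
    simp [e2, EuclideanSpace.inner_single_right]
  simp only [ContinuousLinearMap.add_apply, ContinuousLinearMap.smul_apply, smul_eq_mul,
    innerSL_apply_apply, nsmul_eq_mul, Nat.cast_ofNat, hinner]

theorem oseen_vortex_heat_equation (t : ℝ) (ht : 0 ≤ t) (x : E2) (hx : x ≠ 0) (i : Fin 2) :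
    deriv (fun s : ℝ => theta s x i) t
      = ∑ j : Fin 2,
          fderiv ℝ (fun y => fderiv ℝ (fun z => theta t z i) y (e2 j)) x (e2 j) := by
  have ht1 : (1:ℝ) + t ≠ 0 := by positivity
  have hxn : ‖x‖ ≠ 0 := norm_ne_zero_iff.mpr hx
  have hs : ‖x‖ ^ 2 ≠ 0 := pow_ne_zero _ hxn
  -- time derivative
  have hL : deriv (fun u : ℝ => theta u x i) t = GfunT t (‖x‖ ^ 2) * Lc i x := by
    have heq : (fun u : ℝ => theta u x i) = fun u => Gfun u (‖x‖ ^ 2) * Lc i x :=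
      funext fun u => theta_apply' u x i
    rw [heq]
    exact ((hasDerivAt_GfunT t ht1 hs).mul_const _).deriv
  -- spatial second derivatives
  have hA : HasFDerivAt (fun y : E2 => Gfun t (‖y‖ ^ 2))
      (Gfun1 t (‖x‖ ^ 2) • (2 • innerSL ℝ x)) x :=
    by have := (hasDerivAt_Gfun t ht1 hs).comp_hasFDerivAt x (norm_sq_hasFDerivAt' x); exact this
  have hC : HasFDerivAt (fun y : E2 => Gfun1 t (‖y‖ ^ 2))
      (Gfun2 t (‖x‖ ^ 2) • (2 • innerSL ℝ x)) x :=
    by have := (hasDerivAt_Gfun1 t ht1 hs).comp_hasFDerivAt x (norm_sq_hasFDerivAt' x); exact this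
  have hR : ∀ j : Fin 2,
      fderiv ℝ (fun y => fderiv ℝ (fun z => theta t z i) y (e2 j)) x (e2 j)
        = Lc i (e2 j) * (Gfun1 t (‖x‖ ^ 2) * (2 * x j))
          + (Lc i x * (Gfun1 t (‖x‖ ^ 2) * (2 * ((e2 j) j))
                + (2 * x j) * (Gfun2 t (‖x‖ ^ 2) * (2 * x j)))
             + (Gfun1 t (‖x‖ ^ 2) * (2 * x j)) * Lc i (e2 j)) := by
    intro j
    have hB : HasFDerivAt (fun y : E2 => Lc i y) (Lc i) x := (Lc i).hasFDerivAt
    have hD : HasFDerivAt (fun y : E2 => 2 * y j)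
        ((2:ℝ) • (EuclideanSpace.proj j : E2 →L[ℝ] ℝ)) x :=
      (EuclideanSpace.proj j : E2 →L[ℝ] ℝ).hasFDerivAt.const_mul 2
    have hCD := hC.mul hD
    have hBCD := hB.mul hCD
    have hAK := hA.mul_const (Lc i (e2 j))
    have hφ := hAK.add hBCD
    have hev : (fun y => fderiv ℝ (fun z => theta t z i) y (e2 j)) =ᶠ[nhds x]
        (fun y => Gfun t (‖y‖ ^ 2) * Lc i (e2 j)
          + Lc i y * (Gfun1 t (‖y‖ ^ 2) * (2 * y j))) := by
      filter_upwards [isOpen_ne.mem_nhds hx] with y hy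
      exact fderiv_theta_eval t ht1 i j hy
    rw [hev.fderiv_eq, HasFDerivAt.fderiv (f := fun y : E2 => Gfun t (‖y‖ ^ 2) * Lc i (e2 j)
      + Lc i y * (Gfun1 t (‖y‖ ^ 2) * (2 * y j))) hφ]
    simp only [ContinuousLinearMap.add_apply, ContinuousLinearMap.smul_apply,
      ContinuousLinearMap.coe_smul', Pi.smul_apply, innerSL_apply_apply, smul_eq_mul, Pi.mul_apply]
    have hinner : (inner ℝ x (e2 j) : ℝ) = x j := by
      simp [e2, EuclideanSpace.inner_single_right]
    have hproj : (EuclideanSpace.proj j : E2 →L[ℝ] ℝ) (e2 j) = (e2 j) j := rfl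
    rw [hinner, hproj]
    ring
  rw [hL, Fin.sum_univ_two, hR 0, hR 1]
  have hss : ‖x‖ ^ 2 = x 0 ^ 2 + x 1 ^ 2 := by
    rw [← real_inner_self_eq_norm_sq]
    simp only [PiLp.inner_apply, Fin.sum_univ_two, RCLike.inner_apply, conj_trivial]
    ring
  have hheat := heat_identity t ht1 hs
  have he00 : (e2 0 : E2) 0 = 1 := by simp [e2, EuclideanSpace.single_apply]
  have he11 : (e2 1 : E2) 1 = 1 := by simp [e2, EuclideanSpace.single_apply]
  have h0 : (EuclideanSpace.proj (0 : Fin 2) : E2 →L[ℝ] ℝ) (e2 0) = 1 := by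
    simp [e2, EuclideanSpace.proj]
  have h1 : (EuclideanSpace.proj (1 : Fin 2) : E2 →L[ℝ] ℝ) (e2 1) = 1 := by
    simp [e2, EuclideanSpace.proj]
  have h01 : (EuclideanSpace.proj (0 : Fin 2) : E2 →L[ℝ] ℝ) (e2 1) = 0 := by
    simp [e2, EuclideanSpace.proj, EuclideanSpace.single_apply]
  have h10 : (EuclideanSpace.proj (1 : Fin 2) : E2 →L[ℝ] ℝ) (e2 0) = 0 := by
    simp [e2, EuclideanSpace.proj, EuclideanSpace.single_apply]
  have hx0 : (EuclideanSpace.proj (0 : Fin 2) : E2 →L[ℝ] ℝ) x = x 0 := rfl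
  have hx1 : (EuclideanSpace.proj (1 : Fin 2) : E2 →L[ℝ] ℝ) x = x 1 := rfl
  rw [hheat, hss]
  fin_cases i <;>
    simp only [Lc, Fin.mk_zero, Fin.mk_one, Fin.isValue, Matrix.cons_val_zero,
      Matrix.cons_val_one, Matrix.head_cons, ContinuousLinearMap.neg_apply,
      he00, he11, h0, h1, h01, h10, hx0, hx1] <;>
    ring
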